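/- Let (M,d) be a separable pointed metric space, and let (sₙ)ₙ∈ℕ be a one-to-one sequence of points of M with s₁ = 0_M whose set of terms is dense in M. Suppose there exists a sequence of maps (rₙ)ₙ∈ℕ such that for every n ∈ ℕ: (i) rₙ : M → M is a 1-Lipschitz retraction onto {s₁, …, sₙ} (i.e., rₙ(M) = {s₁,…,sₙ} and rₙ is the identity on this set), and (ii) rₙ ∘ r_{n+1} = rₙ. Then the Lipschitz-free space F(M) has a monotone Schauder basis. -/

import Mathlib

open scoped NNReal ENNReal
open Metric Filter

noncomputable section

/-- The space `Lip₀(M)` of real-valued Lipschitz functions on `M` vanishing at the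
distinguished point `base`, as a submodule of `M → ℝ`. -/
def LipZero (M : Type*) [MetricSpace M] (base : M) : Submodule ℝ (M → ℝ) where
  carrier := {f | MemHolder 1 f ∧ f base = 0}
  add_mem' := fun hf hg => ⟨hf.1.add hg.1, by simp [hf.2, hg.2]⟩
  zero_mem' := ⟨memHolder_zero, rfl⟩
  smul_mem' := fun c f hf => ⟨hf.1.smul, by simp [hf.2]⟩

variable {M : Type*} [MetricSpace M] {base : M}

lemma LipZero.memHolder (f : LipZero M base) : MemHolder 1 (f : M → ℝ) := f.2.1

lemma LipZero.base_eq_zero (f : LipZero M base) : (f : M → ℝ) base = 0 := f.2.2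

lemma LipZero.lipschitzWith (f : LipZero M base) :
    LipschitzWith (nnHolderNorm 1 (f : M → ℝ)) (f : M → ℝ) :=
  holderWith_one.mp f.2.1.holderWith

/-- The norm on `Lip₀(M)`: the optimal Lipschitz constant. -/
noncomputable instance LipZero.normedAddCommGroup : NormedAddCommGroup (LipZero M base) :=
  AddGroupNorm.toNormedAddCommGroup
    { toFun := fun f => nnHolderNorm 1 (f : M → ℝ)
      map_zero' := by simp
      add_le' := fun f g => by
        have := (LipZero.memHolder f).nnHolderNorm_add_le (LipZero.memHolder g)
        exact_mod_cast this
      neg' := fun f => by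
        show (nnHolderNorm 1 ((-f : LipZero M base) : M → ℝ) : ℝ) = _
        have h : ((-f : LipZero M base) : M → ℝ) = (-1 : ℝ) • (f : M → ℝ) := by
          simp
        rw [h, (LipZero.memHolder f).nnHolderNorm_smul ((-1 : ℝ))]
        simp
      eq_zero_of_map_eq_zero' := fun f hf => by
        have hf' : (nnHolderNorm 1 (f : M → ℝ) : ℝ) = 0 := hf
        have h0 : nnHolderNorm 1 (f : M → ℝ) = 0 := by exact_mod_cast hf'
        have hconst := ((LipZero.memHolder f).nnHolderNorm_eq_zero).mp h0
        have : ∀ x, (f : M → ℝ) x = 0 := fun x =>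
          (hconst x base).trans (LipZero.base_eq_zero f)
        exact Subtype.ext (funext this) }

lemma LipZero.norm_def (f : LipZero M base) :
    ‖f‖ = (nnHolderNorm 1 (f : M → ℝ) : ℝ) := rfl

noncomputable instance LipZero.normedSpace : NormedSpace ℝ (LipZero M base) where
  norm_smul_le c f := by
    have : ((c • f : LipZero M base) : M → ℝ) = c • (f : M → ℝ) := rfl
    rw [LipZero.norm_def, LipZero.norm_def, this, (LipZero.memHolder f).nnHolderNorm_smul c]
    push_cast
    simp [norm_smul]

lemma LipZero.dist_le (f : LipZero M base) (x y : M) :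
    dist ((f : M → ℝ) x) ((f : M → ℝ) y) ≤ ‖f‖ * dist x y :=
  (LipZero.lipschitzWith f).dist_le_mul x y

/-- The topological dual of a normed space (old Mathlib `NormedSpace.Dual`, removed upstream);
the topology on `E` is the one coming from its norm. -/
abbrev NormedSpace.Dual (𝕜 : Type*) [NontriviallyNormedField 𝕜] (E : Type*)
    [SeminormedAddCommGroup E] [NormedSpace 𝕜 E] : Type _ :=
  E →L[𝕜] 𝕜

variable (M base) in
/-- The Dirac map `δ : M → Lip₀(M)*`. -/
noncomputable def freeDelta (x : M) : NormedSpace.Dual ℝ (LipZero M base) :=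
  LinearMap.mkContinuous
    { toFun := fun f => (f : M → ℝ) x
      map_add' := fun f g => rfl
      map_smul' := fun c f => rfl }
    (dist x base)
    (fun f => by
      have h := LipZero.dist_le f x base
      rw [LipZero.base_eq_zero f, dist_zero_right] at h
      simpa [mul_comm] using h)

variable (M base) in
/-- The Lipschitz-free space `F(M)`: the closed linear span of the Dirac measures
inside `Lip₀(M)*`. -/
noncomputable def FreeSpace : Submodule ℝ (NormedSpace.Dual ℝ (LipZero M base)) :=
  (Submodule.span ℝ (Set.range (freeDelta M base))).topologicalClosure

variable (M base) in
/-- The Dirac map, viewed as a map into the free space `F(M)`. -/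
noncomputable def freeDeltaF (x : M) : FreeSpace M base :=
  ⟨freeDelta M base x,
    Submodule.le_topologicalClosure _ (Submodule.subset_span ⟨x, rfl⟩)⟩

instance : CompleteSpace (FreeSpace M base) :=
  Submodule.topologicalClosure.completeSpace _


/-- `c` represents `x` in terms of the sequence `e`: the partial sums `∑_{i<n} cᵢ eᵢ`
converge to `x`. -/
def IsSchauderRep {X : Type*} [NormedAddCommGroup X] [NormedSpace ℝ X]
    (e : ℕ → X) (x : X) (c : ℕ → ℝ) : Prop :=
  Filter.Tendsto (fun n => ∑ i ∈ Finset.range n, c i • e i) Filter.atTop (nhds x)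

/-- `X` has a monotone Schauder basis: a (finite or infinite) sequence `e` such that every
`x ∈ X` is uniquely represented as `x = ∑ᵢ cᵢ eᵢ`, and all the canonical projections
(partial-sum operators) have norm at most `1`. -/
def HasMonotoneSchauderBasis (X : Type*) [NormedAddCommGroup X] [NormedSpace ℝ X] : Prop :=
  (∃ (d : ℕ) (e : Fin d → X),
      (∀ x : X, ∃! c : Fin d → ℝ, x = ∑ i, c i • e i) ∧
      (∀ (x : X) (c : Fin d → ℝ), x = ∑ i, c i • e i →
        ∀ n : ℕ, ‖∑ i ∈ Finset.univ.filter (fun i : Fin d => (i : ℕ) < n), c i • e i‖ ≤ ‖x‖)) ∨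
  (∃ e : ℕ → X,
      (∀ x : X, ∃! c : ℕ → ℝ, IsSchauderRep e x c) ∧
      (∀ (x : X) (c : ℕ → ℝ), IsSchauderRep e x c →
        ∀ n : ℕ, ‖∑ i ∈ Finset.range n, c i • e i‖ ≤ ‖x‖))

namespace MonotoneSchauderAux

variable {M : Type*} [MetricSpace M] {base : M}

noncomputable instance (priority := 3000) : UniformSpace (LipZero M base) :=
  PseudoMetricSpace.toUniformSpace

instance (priority := 3000) : TopologicalSpace (LipZero M base) :=
  UniformSpace.toTopologicalSpace

lemma LipZero.norm_le (f : LipZero M base) {C : ℝ≥0} (h : LipschitzWith C (f : M → ℝ)) :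
    ‖f‖ ≤ C := by
  rw [LipZero.norm_def]
  exact_mod_cast (holderWith_one.mpr h).nnholderNorm_le

lemma freeDelta_apply (x : M) (f : LipZero M base) :
    freeDelta M base x f = (f : M → ℝ) x := rfl

lemma freeDelta_base : freeDelta M base base = 0 :=
  ContinuousLinearMap.ext fun f => LipZero.base_eq_zero f

lemma norm_freeDelta_sub_le (x y : M) :
    ‖freeDelta M base x - freeDelta M base y‖ ≤ dist x y := by
  refine ContinuousLinearMap.opNorm_le_bound _ dist_nonneg fun f => ?_
  have h := LipZero.dist_le f x y
  rw [Real.dist_eq] at h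
  simpa [freeDelta_apply, mul_comm] using h

lemma freeDelta_injective : Function.Injective (freeDelta M base) := by
  intro x y hxy
  set g : M → ℝ := fun z => dist z y - dist base y with hg
  have hlip : LipschitzWith 1 g := by
    have h1 : LipschitzWith 1 (fun z : M => dist z y) := LipschitzWith.dist_left y
    have h2 : LipschitzWith 0 (fun _ : M => dist base y) := LipschitzWith.const _
    simpa [hg] using h1.sub h2
  have hmem : g ∈ LipZero M base := ⟨(holderWith_one.mpr hlip).memHolder, by simp [hg]⟩
  have h2 : dist x y - dist base y = dist y y - dist base y :=
    ContinuousLinearMap.ext_iff.mp hxy (⟨g, hmem⟩ : LipZero M base)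
  have : dist x y = 0 := by simpa using h2
  exact dist_eq_zero.mp this

/-- Pre-composition with a base-preserving `1`-Lipschitz map, as an operator on `Lip₀(M)`. -/
def compCLM (ρ : M → M) (hρ : LipschitzWith 1 ρ) (hb : ρ base = base) :
    LipZero M base →L[ℝ] LipZero M base :=
  LinearMap.mkContinuous
    { toFun := fun f => ⟨(f : M → ℝ) ∘ ρ,
        ⟨(holderWith_one.mpr (by simpa using (LipZero.lipschitzWith f).comp hρ)).memHolder,
          by simp [Function.comp, hb, LipZero.base_eq_zero f]⟩⟩
      map_add' := fun f g => rfl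
      map_smul' := fun c f => rfl }
    1
    (fun f => by
      rw [one_mul]
      exact LipZero.norm_le _ (by simpa using (LipZero.lipschitzWith f).comp hρ))

lemma compCLM_apply (ρ : M → M) (hρ : LipschitzWith 1 ρ) (hb : ρ base = base)
    (f : LipZero M base) (x : M) :
    ((compCLM ρ hρ hb f : LipZero M base) : M → ℝ) x = (f : M → ℝ) (ρ x) := rfl

lemma norm_compCLM_le (ρ : M → M) (hρ : LipschitzWith 1 ρ) (hb : ρ base = base) :
    ‖compCLM ρ hρ hb‖ ≤ 1 :=
  LinearMap.mkContinuous_norm_le _ zero_le_one _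

/-- Push-forward by `ρ` on the dual of `Lip₀(M)`. -/
def dualP (ρ : M → M) (hρ : LipschitzWith 1 ρ) (hb : ρ base = base) :
    NormedSpace.Dual ℝ (LipZero M base) →L[ℝ] NormedSpace.Dual ℝ (LipZero M base) :=
  (ContinuousLinearMap.compL ℝ (LipZero M base) (LipZero M base) ℝ).flip (compCLM ρ hρ hb)

lemma dualP_apply (ρ : M → M) (hρ : LipschitzWith 1 ρ) (hb : ρ base = base)
    (φ : NormedSpace.Dual ℝ (LipZero M base)) :
    dualP ρ hρ hb φ = φ.comp (compCLM ρ hρ hb) := rfl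

lemma dualP_delta (ρ : M → M) (hρ : LipschitzWith 1 ρ) (hb : ρ base = base) (x : M) :
    dualP ρ hρ hb (freeDelta M base x) = freeDelta M base (ρ x) :=
  ContinuousLinearMap.ext fun _ => rfl

lemma norm_dualP_le (ρ : M → M) (hρ : LipschitzWith 1 ρ) (hb : ρ base = base)
    (φ : NormedSpace.Dual ℝ (LipZero M base)) :
    ‖dualP ρ hρ hb φ‖ ≤ ‖φ‖ := by
  rw [dualP_apply]
  calc ‖φ.comp (compCLM ρ hρ hb)‖ ≤ ‖φ‖ * ‖compCLM ρ hρ hb‖ :=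
        ContinuousLinearMap.opNorm_comp_le _ _
    _ ≤ ‖φ‖ * 1 := mul_le_mul_of_nonneg_left (norm_compCLM_le ρ hρ hb) (norm_nonneg _)
    _ = ‖φ‖ := mul_one _

lemma coe_freeSpace :
    ((FreeSpace M base : Submodule ℝ _) : Set (NormedSpace.Dual ℝ (LipZero M base)))
      = closure (Submodule.span ℝ (Set.range (freeDelta M base)) :
          Set (NormedSpace.Dual ℝ (LipZero M base))) :=
  Submodule.topologicalClosure_coe _

lemma dualP_mem (ρ : M → M) (hρ : LipschitzWith 1 ρ) (hb : ρ base = base)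
    {φ : NormedSpace.Dual ℝ (LipZero M base)} (hφ : φ ∈ FreeSpace M base) :
    dualP ρ hρ hb φ ∈ FreeSpace M base := by
  have hx : φ ∈ closure (Submodule.span ℝ (Set.range (freeDelta M base)) :
      Set (NormedSpace.Dual ℝ (LipZero M base))) := by
    rw [← coe_freeSpace]; exact hφ
  have hmaps : Set.MapsTo (dualP ρ hρ hb)
      (Submodule.span ℝ (Set.range (freeDelta M base)) : Set _)
      (Submodule.span ℝ (Set.range (freeDelta M base)) : Set _) := by
    intro ψ hψ
    have hle : Submodule.span ℝ (Set.range (freeDelta M base)) ≤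
        Submodule.comap (dualP ρ hρ hb : _ →ₗ[ℝ] _)
          (Submodule.span ℝ (Set.range (freeDelta M base))) := by
      rw [Submodule.span_le]
      rintro _ ⟨x, rfl⟩
      simp only [SetLike.mem_coe, Submodule.mem_comap]
      rw [ContinuousLinearMap.coe_coe, dualP_delta]
      exact Submodule.subset_span ⟨ρ x, rfl⟩
    exact hle hψ
  have := map_mem_closure (dualP ρ hρ hb).continuous hx hmaps
  rw [← coe_freeSpace] at this
  exact this

/-- `ρ` induces an operator on the free space. -/
def QF (ρ : M → M) (hρ : LipschitzWith 1 ρ) (hb : ρ base = base) :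
    FreeSpace M base →L[ℝ] FreeSpace M base :=
  ContinuousLinearMap.codRestrict
    ((dualP ρ hρ hb).comp (FreeSpace M base).subtypeL)
    (FreeSpace M base) (fun x => dualP_mem ρ hρ hb x.2)

lemma QF_coe (ρ : M → M) (hρ : LipschitzWith 1 ρ) (hb : ρ base = base)
    (x : FreeSpace M base) :
    (QF ρ hρ hb x : NormedSpace.Dual ℝ (LipZero M base)) = dualP ρ hρ hb (x : _) := rfl

lemma QF_delta (ρ : M → M) (hρ : LipschitzWith 1 ρ) (hb : ρ base = base) (x : M) :
    QF ρ hρ hb (freeDeltaF M base x) = freeDeltaF M base (ρ x) :=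
  Subtype.ext (dualP_delta ρ hρ hb x)

lemma norm_QF_le (ρ : M → M) (hρ : LipschitzWith 1 ρ) (hb : ρ base = base)
    (x : FreeSpace M base) : ‖QF ρ hρ hb x‖ ≤ ‖x‖ := by
  show ‖(QF ρ hρ hb x : NormedSpace.Dual ℝ (LipZero M base))‖ ≤ ‖(x : _)‖
  rw [QF_coe]
  exact norm_dualP_le ρ hρ hb _

lemma dense_span_freeDeltaF :
    Dense ((Submodule.span ℝ (Set.range (freeDeltaF M base)) :
      Submodule ℝ (FreeSpace M base)) : Set (FreeSpace M base)) := by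
  intro x
  rw [Metric.mem_closure_iff]
  intro ε hε
  have hx : (x : NormedSpace.Dual ℝ (LipZero M base)) ∈
      closure (Submodule.span ℝ (Set.range (freeDelta M base)) : Set _) := by
    rw [← coe_freeSpace]; exact x.2
  rcases Metric.mem_closure_iff.mp hx ε hε with ⟨φ, hφ, hdist⟩
  have hmap : Submodule.map (FreeSpace M base).subtype
      (Submodule.span ℝ (Set.range (freeDeltaF M base)))
      = Submodule.span ℝ (Set.range (freeDelta M base)) := by
    rw [Submodule.map_span]
    congr 1
    rw [← Set.range_comp]
    rfl
  rw [← hmap] at hφ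
  rcases hφ with ⟨y, hy, hval⟩
  refine ⟨y, hy, ?_⟩
  rw [Subtype.dist_eq]
  rw [show ((y : FreeSpace M base) : NormedSpace.Dual ℝ (LipZero M base)) = φ from hval]
  exact hdist

end MonotoneSchauderAux

/-- Abstract criterion: a sequence of norm-one-bounded "partial sum" operators converging
pointwise to the identity, with one-dimensional consecutive differences, yields a
monotone Schauder basis. -/
lemma hasMonotoneSchauderBasis_of_projections {X : Type*} [NormedAddCommGroup X]
    [NormedSpace ℝ X] (Q : ℕ → X →L[ℝ] X) (e : ℕ → X)
    (hQ0 : ∀ x, Q 0 x = 0)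
    (hnorm : ∀ n x, ‖Q n x‖ ≤ ‖x‖)
    (htendsto : ∀ x, Tendsto (fun n => Q n x) atTop (nhds x))
    (he0 : ∀ k, e k ≠ 0)
    (hdiff : ∀ k x, Q (k + 1) x - Q k x ∈ Submodule.span ℝ {e k})
    (hQe : ∀ m k, Q (m + 1) (e k) - Q m (e k) = if k = m then e k else 0) :
    HasMonotoneSchauderBasis X := by
  right
  have hc : ∀ (x : X) (k : ℕ), ∃ t : ℝ, Q (k + 1) x - Q k x = t • e k := by
    intro x k
    rcases Submodule.mem_span_singleton.mp (hdiff k x) with ⟨t, ht⟩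
    exact ⟨t, ht.symm⟩
  choose c hcd using hc
  have hsum : ∀ (x : X) (n : ℕ), ∑ i ∈ Finset.range n, c x i • e i = Q n x := by
    intro x n
    rw [Finset.sum_congr rfl (fun i _ => (hcd x i).symm),
      Finset.sum_range_sub (fun i => Q i x), hQ0 x, sub_zero]
  have hrep : ∀ x : X, IsSchauderRep e x (c x) := by
    intro x
    exact (htendsto x).congr fun n => (hsum x n).symm
  have huniq : ∀ (x : X) (c' : ℕ → ℝ), IsSchauderRep e x c' → c' = c x := by
    intro x c' h
    funext m
    have hD : Tendsto (fun n => (Q (m + 1) - Q m) (∑ i ∈ Finset.range n, c' i • e i))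
        atTop (nhds ((Q (m + 1) - Q m) x)) :=
      ((Q (m + 1) - Q m).continuous.tendsto x).comp h
    have hev : ∀ n, n ≥ m + 1 →
        (Q (m + 1) - Q m) (∑ i ∈ Finset.range n, c' i • e i) = c' m • e m := by
      intro n hn
      rw [map_sum]
      have hterm : ∀ i ∈ Finset.range n,
          (Q (m + 1) - Q m) (c' i • e i) = if i = m then c' i • e i else 0 := by
        intro i _
        rw [map_smul, ContinuousLinearMap.sub_apply]
        rw [show (Q (m + 1)) (e i) - (Q m) (e i) = _ from hQe m i]
        split_ifs with hi
        · rfl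
        · simp
      rw [Finset.sum_congr rfl hterm, Finset.sum_ite_eq' (Finset.range n) m
        (fun i => c' i • e i), if_pos (Finset.mem_range.mpr hn)]
    have hlim2 : Tendsto (fun n => (Q (m + 1) - Q m) (∑ i ∈ Finset.range n, c' i • e i))
        atTop (nhds (c' m • e m)) := by
      refine tendsto_const_nhds.congr' ?_
      filter_upwards [eventually_ge_atTop (m + 1)] with n hn
      exact (hev n hn).symm
    have hx : (Q (m + 1) - Q m) x = c' m • e m := tendsto_nhds_unique hD hlim2
    have hx' : (Q (m + 1) - Q m) x = c x m • e m := by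
      rw [ContinuousLinearMap.sub_apply]; exact hcd x m
    exact smul_left_injective ℝ (he0 m) (hx.symm.trans hx')
  refine ⟨e, fun x => ⟨c x, hrep x, fun c' hc' => huniq x c' hc'⟩, ?_⟩
  intro x c' hc' n
  rw [huniq x c' hc', hsum]
  exact hnorm n x

set_option maxHeartbeats 1000000

/-- **(Lemma `l:sufficientSchauderBasis`).** Let `M` be a separable pointed metric space,
`(sₙ)` a one-to-one dense sequence with `s 0 = base`, and `(rₙ)` a sequence of maps such
that each `rₙ` is a `1`-Lipschitz retraction of `M` onto `{s 0, …, s n}` and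
`rₙ ∘ r_{n+1} = rₙ`. Then the Lipschitz-free space `F(M)` has a monotone Schauder basis. -/
theorem freeSpace_hasMonotoneSchauderBasis_of_retractions
    (M : Type*) [MetricSpace M] [TopologicalSpace.SeparableSpace M] (base : M)
    (s : ℕ → M) (hs0 : s 0 = base) (hinj : Function.Injective s) (hdense : DenseRange s)
    (r : ℕ → M → M)
    (hlip : ∀ n : ℕ, LipschitzWith 1 (r n))
    (hrange : ∀ n : ℕ, Set.range (r n) = s '' Set.Iic n)
    (hfix : ∀ n : ℕ, ∀ k ≤ n, r n (s k) = s k)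
    (hcomp : ∀ n : ℕ, r n ∘ r (n + 1) = r n) :
    HasMonotoneSchauderBasis (FreeSpace M base) := by
  classical
  have hbase : ∀ n, r n base = base := fun n => by
    rw [← hs0]; exact hfix n 0 (Nat.zero_le n)
  have hrange' : ∀ n x, ∃ j, j ≤ n ∧ r n x = s j := by
    intro n x
    have hx : r n x ∈ Set.range (r n) := ⟨x, rfl⟩
    rw [hrange n] at hx
    rcases hx with ⟨j, hj, hjx⟩
    exact ⟨j, hj, hjx.symm⟩
  have hidem : ∀ m k, m ≤ k → ∀ y, r m (r k y) = r m y := by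
    intro m k hmk
    induction k, hmk using Nat.le_induction with
    | base => intro y; rcases hrange' m y with ⟨j, hj, hy⟩; rw [hy]; exact hfix m j hj
    | succ k hmk ih =>
      intro y
      have h1 : r k (r (k + 1) y) = r k y := congrFun (hcomp k) y
      calc r m (r (k + 1) y) = r m (r k (r (k + 1) y)) := (ih (r (k + 1) y)).symm
        _ = r m (r k y) := by rw [h1]
        _ = r m y := ih y
  set Q : ℕ → FreeSpace M base →L[ℝ] FreeSpace M base :=
    fun n => MonotoneSchauderAux.QF (r n) (hlip n) (hbase n) with hQdef
  set e : ℕ → FreeSpace M base :=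
    fun k => freeDeltaF M base (s (k + 1)) - freeDeltaF M base (r k (s (k + 1))) with hedef
  have hQdelta : ∀ n x, Q n (freeDeltaF M base x) = freeDeltaF M base (r n x) :=
    fun n x => MonotoneSchauderAux.QF_delta (r n) (hlip n) (hbase n) x
  have hQnorm : ∀ n (x : FreeSpace M base), ‖Q n x‖ ≤ ‖x‖ :=
    fun n x => MonotoneSchauderAux.norm_QF_le (r n) (hlip n) (hbase n) x
  -- `Q 0 = 0`
  have hr0 : ∀ z, r 0 z = base := by
    intro z; rcases hrange' 0 z with ⟨j, hj, hz⟩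
    rw [hz, Nat.le_zero.mp hj, hs0]
  have hQ0 : ∀ x, Q 0 x = 0 := by
    intro x
    apply Subtype.ext
    show MonotoneSchauderAux.dualP (r 0) (hlip 0) (hbase 0) (x : _) = 0
    rw [MonotoneSchauderAux.dualP_apply]
    apply ContinuousLinearMap.ext
    intro f
    have hzero : MonotoneSchauderAux.compCLM (r 0) (hlip 0) (hbase 0) f = 0 := by
      apply Subtype.ext
      funext z
      show (f : M → ℝ) (r 0 z) = 0
      rw [hr0 z]; exact LipZero.base_eq_zero f
    show (x : NormedSpace.Dual ℝ (LipZero M base))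
      (MonotoneSchauderAux.compCLM (r 0) (hlip 0) (hbase 0) f) = 0
    rw [hzero, map_zero]
  -- pointwise convergence of the retractions
  have hry : ∀ y : M, Tendsto (fun n => r n y) atTop (nhds y) := by
    intro y
    rw [Metric.tendsto_atTop]
    intro ε hε
    obtain ⟨k, hk⟩ := hdense.exists_dist_lt y (half_pos hε)
    refine ⟨k, fun n hn => ?_⟩
    have h1 : dist (r n y) (s k) ≤ dist y (s k) := by
      calc dist (r n y) (s k) = dist (r n y) (r n (s k)) := by rw [hfix n k hn]
        _ ≤ dist y (s k) := by simpa using (hlip n).dist_le_mul y (s k)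
    calc dist (r n y) y ≤ dist (r n y) (s k) + dist (s k) y := dist_triangle _ _ _
      _ ≤ dist y (s k) + dist (s k) y := by linarith
      _ < ε := by rw [dist_comm (s k) y]; linarith
  -- convergence of `Q n` at Dirac points
  have hdeltaTendsto : ∀ y : M,
      Tendsto (fun n => Q n (freeDeltaF M base y)) atTop (nhds (freeDeltaF M base y)) := by
    intro y
    rw [tendsto_iff_dist_tendsto_zero]
    have hbnd : ∀ n, dist (Q n (freeDeltaF M base y)) (freeDeltaF M base y)
        ≤ dist (r n y) y := by
      intro n
      rw [hQdelta]
      rw [Subtype.dist_eq]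
      show dist (freeDelta M base (r n y)) (freeDelta M base y) ≤ _
      rw [dist_eq_norm]
      exact MonotoneSchauderAux.norm_freeDelta_sub_le _ _
    have hd : Tendsto (fun n => dist (r n y) y) atTop (nhds 0) := by
      have h := hry y
      rw [tendsto_iff_dist_tendsto_zero] at h
      exact h
    exact squeeze_zero (fun n => dist_nonneg) hbnd hd
  -- convergence on the span of the Dirac points
  have hT : ∀ x : FreeSpace M base,
      x ∈ Submodule.span ℝ (Set.range (freeDeltaF M base)) →
      Tendsto (fun n => Q n x) atTop (nhds x) := by
    intro x hx
    induction hx using Submodule.span_induction with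
    | mem z hz => rcases hz with ⟨y, rfl⟩; exact hdeltaTendsto y
    | zero =>
        have hz : (fun n => Q n (0 : FreeSpace M base)) = fun _ => (0 : FreeSpace M base) :=
          funext fun n => map_zero (Q n)
        rw [hz]; exact tendsto_const_nhds
    | add a b _ _ iha ihb =>
        have hz : (fun n => Q n (a + b)) = fun n => Q n a + Q n b :=
          funext fun n => map_add (Q n) a b
        rw [hz]; exact iha.add ihb
    | smul t a _ iha =>
        have hz : (fun n => Q n (t • a)) = fun n => t • Q n a :=
          funext fun n => map_smul (Q n) t a
        rw [hz]; exact iha.const_smul t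
  -- convergence everywhere
  have htendsto : ∀ x : FreeSpace M base, Tendsto (fun n => Q n x) atTop (nhds x) := by
    intro x
    rw [Metric.tendsto_atTop]
    intro ε hε
    have hxcl : x ∈ closure ((Submodule.span ℝ (Set.range (freeDeltaF M base)) :
        Submodule ℝ (FreeSpace M base)) : Set (FreeSpace M base)) :=
      MonotoneSchauderAux.dense_span_freeDeltaF x
    rcases Metric.mem_closure_iff.mp hxcl (ε / 3) (by linarith) with ⟨y, hy, hxy⟩
    have hyT := hT y hy
    rw [Metric.tendsto_atTop] at hyT
    rcases hyT (ε / 3) (by linarith) with ⟨N, hN⟩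
    refine ⟨N, fun n hn => ?_⟩
    have h1 : dist (Q n x) (Q n y) ≤ dist x y := by
      rw [dist_eq_norm, ← map_sub, dist_eq_norm]
      exact hQnorm n (x - y)
    have h2 := hN n hn
    calc dist (Q n x) x ≤ dist (Q n x) (Q n y) + dist (Q n y) x := dist_triangle _ _ _
      _ ≤ dist (Q n x) (Q n y) + (dist (Q n y) y + dist y x) := by
          linarith [dist_triangle (Q n y) y x]
      _ < ε := by rw [dist_comm y x]; linarith
  -- the candidate basis vectors are nonzero
  have he0 : ∀ k, e k ≠ 0 := by
    intro k
    rcases hrange' k (s (k + 1)) with ⟨j, hj, hkj⟩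
    have hne : s (k + 1) ≠ r k (s (k + 1)) := by
      rw [hkj]; intro h; have := hinj h; omega
    have hdne : freeDeltaF M base (s (k + 1)) ≠ freeDeltaF M base (r k (s (k + 1))) := by
      intro h
      exact hne (MonotoneSchauderAux.freeDelta_injective (congrArg Subtype.val h))
    simp only [hedef]
    intro h
    exact hdne (sub_eq_zero.mp h)
  -- consecutive differences lie on the line spanned by `e k`
  have hdiff : ∀ k (x : FreeSpace M base),
      Q (k + 1) x - Q k x ∈ Submodule.span ℝ {e k} := by
    intro k x
    have hclosed : IsClosed ((Submodule.span ℝ {e k} :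
        Submodule ℝ (FreeSpace M base)) : Set (FreeSpace M base)) := by
      have : FiniteDimensional ℝ (Submodule.span ℝ {e k} :
          Submodule ℝ (FreeSpace M base)) :=
        FiniteDimensional.span_of_finite ℝ (Set.finite_singleton _)
      exact Submodule.closed_of_finiteDimensional _
    have hdelta : ∀ y : M,
        (Q (k + 1) - Q k) (freeDeltaF M base y) ∈ Submodule.span ℝ {e k} := by
      intro y
      have hcy : r k (r (k + 1) y) = r k y := by
        have h := congrFun (hcomp k) y
        simpa [Function.comp] using h
      have heq : (Q (k + 1) - Q k) (freeDeltaF M base y)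
          = freeDeltaF M base (r (k + 1) y)
            - freeDeltaF M base (r k (r (k + 1) y)) := by
        rw [ContinuousLinearMap.sub_apply, hQdelta, hQdelta, hcy]
      rcases hrange' (k + 1) y with ⟨j, hj, hz⟩
      rcases Nat.lt_or_ge j (k + 1) with hjk | hjk
      · have hfixj : r k (r (k + 1) y) = r (k + 1) y := by
          rw [hz]; exact hfix k j (by omega)
        rw [heq, hfixj, sub_self]
        exact Submodule.zero_mem _
      · have hj1 : j = k + 1 := le_antisymm hj hjk
        rw [heq, hz, hj1]
        exact Submodule.mem_span_singleton_self (e k)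
    have hsub : ∀ z : FreeSpace M base,
        z ∈ Submodule.span ℝ (Set.range (freeDeltaF M base)) →
        (Q (k + 1) - Q k) z ∈ Submodule.span ℝ {e k} := by
      intro z hz
      induction hz using Submodule.span_induction with
      | mem w hw => rcases hw with ⟨y, rfl⟩; exact hdelta y
      | zero => rw [map_zero]; exact Submodule.zero_mem _
      | add a b _ _ iha ihb => rw [map_add]; exact Submodule.add_mem _ iha ihb
      | smul t a _ iha => rw [map_smul]; exact Submodule.smul_mem _ t iha
    have hmaps : Set.MapsTo (Q (k + 1) - Q k)
        ((Submodule.span ℝ (Set.range (freeDeltaF M base)) :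
          Submodule ℝ (FreeSpace M base)) : Set (FreeSpace M base))
        ((Submodule.span ℝ {e k} : Submodule ℝ (FreeSpace M base)) :
          Set (FreeSpace M base)) := fun z hz => hsub z hz
    have hxcl : x ∈ closure ((Submodule.span ℝ (Set.range (freeDeltaF M base)) :
        Submodule ℝ (FreeSpace M base)) : Set (FreeSpace M base)) :=
      MonotoneSchauderAux.dense_span_freeDeltaF x
    have hmem := map_mem_closure (Q (k + 1) - Q k).continuous hxcl hmaps
    rw [hclosed.closure_eq] at hmem
    have : (Q (k + 1) - Q k) x ∈ Submodule.span ℝ {e k} := hmem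
    rwa [ContinuousLinearMap.sub_apply] at this
  -- the key algebraic identity
  have hQe : ∀ m k, Q (m + 1) (e k) - Q m (e k) = if k = m then e k else 0 := by
    intro m k
    rcases hrange' k (s (k + 1)) with ⟨j, hj, hkj⟩
    have hQe' : ∀ n, Q n (e k) = freeDeltaF M base (r n (s (k + 1)))
        - freeDeltaF M base (r n (r k (s (k + 1)))) := by
      intro n
      simp only [hedef]
      rw [map_sub, hQdelta, hQdelta]
    rcases lt_trichotomy k m with hkm | hkm | hmk
    · rw [if_neg (by omega)]
      have hfa : ∀ n, k + 1 ≤ n → r n (s (k + 1)) = s (k + 1) :=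
        fun n hn => hfix n (k + 1) hn
      have hfb : ∀ n, k ≤ n → r n (r k (s (k + 1))) = r k (s (k + 1)) := by
        intro n hn; rw [hkj]; exact hfix n j (le_trans hj hn)
      rw [hQe' (m + 1), hQe' m, hfa (m + 1) (by omega), hfa m (by omega),
        hfb (m + 1) (by omega), hfb m (by omega), sub_self]
    · subst hkm
      rw [if_pos rfl]
      have h1 : r (k + 1) (s (k + 1)) = s (k + 1) := hfix (k + 1) (k + 1) le_rfl
      have h2 : r (k + 1) (r k (s (k + 1))) = r k (s (k + 1)) := by
        rw [hkj]; exact hfix (k + 1) j (by omega)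
      have h3 : r k (r k (s (k + 1))) = r k (s (k + 1)) := hidem k k le_rfl _
      rw [hQe' (k + 1), hQe' k, h1, h2, h3, sub_self, sub_zero]
    · rw [if_neg (by omega)]
      have hA : ∀ n, n ≤ k → r n (r k (s (k + 1))) = r n (s (k + 1)) :=
        fun n hn => hidem n k hn _
      rw [hQe' (m + 1), hQe' m, hA (m + 1) (by omega), hA m (by omega),
        sub_self, sub_self, sub_zero]
  exact hasMonotoneSchauderBasis_of_projections Q e hQ0 hQnorm htendsto he0 hdiff hQe

end
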